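/- Let E be the space of differentiable real functions on [-π, π] with the sup norm. Equip the domain with the pointwise order and the codomain with the order x ≤ y iff x(t) ≤ y(t) and x'(t) ≤ y'(t) for all t. Then the set B = {t ↦ cos(k t) : k ∈ ℕ} is order bounded in the pointwise order (being contained in [-1, 1]) but is not order bounded in the second order; hence the identity operator between these two ordered normed spaces is topologically continuous but not order bounded. -/

import Mathlib

open Set Real

/-- The "derivative order" on differentiable functions on `[-π, π]`:
`x ≤ y` iff `x t ≤ y t` and `x' t ≤ y' t` for all `t ∈ [-π, π]`. -/
def derivLe (x y : ℝ → ℝ) : Prop :=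
  ∀ t ∈ Set.Icc (-Real.pi) Real.pi, x t ≤ y t ∧ deriv x t ≤ deriv y t

lemma deriv_cos_mul (k : ℕ) (t : ℝ) :
    deriv (fun t : ℝ => Real.cos (k * t)) t = -Real.sin (k * t) * k := by
  have h : HasDerivAt (fun t : ℝ => Real.cos ((k : ℝ) * t)) (-Real.sin ((k : ℝ) * t) * k) t := by
    have h1 : HasDerivAt (fun t : ℝ => (k : ℝ) * t) k t := by
      simpa using (hasDerivAt_id t).const_mul (k : ℝ)
    exact (Real.hasDerivAt_cos ((k : ℝ) * t)).comp t h1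
  exact h.deriv

/-- The family `B = {t ↦ cos (k t) : k ∈ ℕ}` of differentiable functions on `[-π, π]`
is order bounded for the pointwise order (it lies in the interval `[-1, 1]`), but it is
not order bounded for the derivative order: no pair of differentiable functions `x ≤ y`
dominates it.  Hence the identity operator between these two ordered normed spaces is
topologically continuous but not order bounded. -/
theorem stmt3 :
    (∀ k : ℕ, ∀ t ∈ Set.Icc (-Real.pi) Real.pi,
        -1 ≤ Real.cos (k * t) ∧ Real.cos (k * t) ≤ 1) ∧
    ¬ ∃ x y : ℝ → ℝ, Differentiable ℝ x ∧ Differentiable ℝ y ∧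
        ∀ k : ℕ, derivLe x (fun t => Real.cos (k * t)) ∧
          derivLe (fun t => Real.cos (k * t)) y := by
  constructor
  · intro k t _
    exact ⟨Real.neg_one_le_cos _, Real.cos_le_one _⟩
  · rintro ⟨x, y, hx, hy, h⟩
    -- For each k ≥ 1, show y (-π/k) ≤ y 0 - 2
    have key : ∀ k : ℕ, 1 ≤ k → y (-Real.pi / k) ≤ y 0 - 2 := by
      intro k hk
      have hk0 : (0 : ℝ) < k := by exact_mod_cast hk
      have hπ : (0 : ℝ) < Real.pi := Real.pi_pos
      have ha0 : -Real.pi / k < 0 := div_neg_of_neg_of_pos (by linarith) hk0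
      have haπ : -Real.pi ≤ -Real.pi / k := by
        rw [neg_div]
        exact neg_le_neg (div_le_self hπ.le (by exact_mod_cast hk))
      have hsub : Set.Icc (-Real.pi / k) 0 ⊆ Set.Icc (-Real.pi) Real.pi :=
        Set.Icc_subset_Icc haπ hπ.le
      -- g = y - cos(k·) is monotone on [-π/k, 0]
      set g : ℝ → ℝ := fun t => y t - Real.cos (k * t) with hg
      have hcdiff : Differentiable ℝ (fun t : ℝ => Real.cos (k * t)) := by
        fun_prop
      have hgdiff : Differentiable ℝ g := hy.sub hcdiff
      have hmono : MonotoneOn g (Set.Icc (-Real.pi / k) 0) := by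
        apply monotoneOn_of_deriv_nonneg (convex_Icc _ _) hgdiff.continuous.continuousOn
          (fun t ht => (hgdiff t).differentiableWithinAt)
        intro t ht
        have ht' : t ∈ Set.Icc (-Real.pi) Real.pi := hsub (interior_subset ht)
        have hd := ((h k).2 t ht').2
        have : deriv g t = deriv y t - deriv (fun t : ℝ => Real.cos (k * t)) t := by
          rw [hg]
          exact deriv_sub (hy t) (hcdiff t)
        rw [this]
        linarith
      have h1 := hmono ⟨le_refl _, ha0.le⟩ ⟨ha0.le, le_refl _⟩ ha0.le
      have hcos0 : Real.cos ((k : ℝ) * 0) = 1 := by simp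
      have hcosa : Real.cos ((k : ℝ) * (-Real.pi / k)) = -1 := by
        have : (k : ℝ) * (-Real.pi / k) = -Real.pi := by
          field_simp
        rw [this]
        simp
      simp only [hg] at h1
      rw [hcos0, hcosa] at h1
      linarith
    -- continuity of y at 0 gives a contradiction
    have hts : Filter.Tendsto (fun k : ℕ => y (-Real.pi / k)) Filter.atTop (nhds (y 0)) := by
      have h1 : Filter.Tendsto (fun k : ℕ => -Real.pi / k) Filter.atTop (nhds 0) := by
        simpa using (tendsto_const_div_atTop_nhds_zero_nat (-Real.pi))
      exact (hy.continuous.tendsto 0).comp h1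
    have hle : y 0 ≤ y 0 - 2 := by
      apply le_of_tendsto hts
      filter_upwards [Filter.eventually_ge_atTop 1] with k hk
      exact key k hk
    linarith
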